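/- Suppose 0 < R < 2 and let x = (C, J_1, …, J_n) ∈ M_n(R) = F⁻¹(0). The Fréchet derivative of F at x fails to be surjective onto ℝ^{2n} if and only if R = R_n and one of the following holds: (i) n is even and there exists k such that C = B_k, the (k + n/2)-th arm is stretched out (|C − B_{k+n/2}| = 2), and J_k lies on the line through B_k and B_{k+n/2} (the folded arm and the stretched-out arm lie on a common line); (ii) n is odd and there exists k such that C = B_k and there exist two distinct indices i ≠ j with |C − B_i| = |C − B_j| = 2 (a folded arm together with two stretched-out arms). In either case the body C is located at some B_k. -/

import Mathlib

/-- Euclidean norm of a vector in ℝ². -/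
noncomputable def enorm2 (v : ℝ × ℝ) : ℝ := Real.sqrt (v.1 ^ 2 + v.2 ^ 2)

/-- The k-th fixed endpoint `B_k = (R cos(2kπ/n), R sin(2kπ/n))` (indices from 0). -/
noncomputable def Bpt (n : ℕ) (R : ℝ) (k : Fin n) : ℝ × ℝ :=
  (R * Real.cos (2 * (k.val : ℝ) * Real.pi / (n : ℝ)),
   R * Real.sin (2 * (k.val : ℝ) * Real.pi / (n : ℝ)))

/-- The configuration space `M_n(R)` of spiders with `n` arms of radius `R`,
as a subset of `(ℝ²)^{n+1} ≅ ℝ^{2n+2}`: a pair `(C, J)` with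
`|C − J_k| = 1` and `|J_k − B_k| = 1` for all `k`. -/
noncomputable def MSpace (n : ℕ) (R : ℝ) : Set ((ℝ × ℝ) × (Fin n → ℝ × ℝ)) :=
  {x | ∀ k : Fin n, enorm2 (x.1 - x.2 k) = 1 ∧ enorm2 (x.2 k - Bpt n R k) = 1}

/-- `d_n`, the maximum distance between `n`-th roots of unity. -/
noncomputable def dmax (n : ℕ) : ℝ :=
  if Even n then 2
  else Real.sqrt (2 - 2 * Real.cos (2 * ((n / 2 : ℕ) : ℝ) * Real.pi / (n : ℝ)))

/-- The critical radius `R_n = 2 / d_n`. -/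
noncomputable def Rcrit (n : ℕ) : ℝ := 2 / dmax n

/-- The defining map `F = (f_1, …, f_{2n}) : ℝ^{2n+2} → ℝ^{2n}`. -/
noncomputable def Fmap (n : ℕ) (R : ℝ) (x : (ℝ × ℝ) × (Fin n → ℝ × ℝ)) :
    Fin n → ℝ × ℝ := fun k =>
  ((x.1.1 - (x.2 k).1) ^ 2 + (x.1.2 - (x.2 k).2) ^ 2 - 1,
   ((x.2 k).1 - (Bpt n R k).1) ^ 2 + ((x.2 k).2 - (Bpt n R k).2) ^ 2 - 1)


namespace SpiderAux
open Real



variable (n : ℕ)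

abbrev E (n : ℕ) := (ℝ × ℝ) × (Fin n → ℝ × ℝ)

noncomputable def pC1 : E n →L[ℝ] ℝ :=
  (ContinuousLinearMap.fst ℝ ℝ ℝ).comp (ContinuousLinearMap.fst ℝ (ℝ × ℝ) (Fin n → ℝ × ℝ))
noncomputable def pC2 : E n →L[ℝ] ℝ :=
  (ContinuousLinearMap.snd ℝ ℝ ℝ).comp (ContinuousLinearMap.fst ℝ (ℝ × ℝ) (Fin n → ℝ × ℝ))
noncomputable def pJ1 (k : Fin n) : E n →L[ℝ] ℝ :=
  (ContinuousLinearMap.fst ℝ ℝ ℝ).comp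
    ((ContinuousLinearMap.proj k).comp (ContinuousLinearMap.snd ℝ (ℝ × ℝ) (Fin n → ℝ × ℝ)))
noncomputable def pJ2 (k : Fin n) : E n →L[ℝ] ℝ :=
  (ContinuousLinearMap.snd ℝ ℝ ℝ).comp
    ((ContinuousLinearMap.proj k).comp (ContinuousLinearMap.snd ℝ (ℝ × ℝ) (Fin n → ℝ × ℝ)))

noncomputable def Dmap (R : ℝ) (x : E n) : E n →L[ℝ] (Fin n → ℝ × ℝ) :=
  ContinuousLinearMap.pi fun k =>
    (((2 * (x.1.1 - (x.2 k).1)) • (pC1 n - pJ1 n k) +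
      (2 * (x.1.2 - (x.2 k).2)) • (pC2 n - pJ2 n k)).prod
     ((2 * ((x.2 k).1 - (Bpt n R k).1)) • pJ1 n k +
      (2 * ((x.2 k).2 - (Bpt n R k).2)) • pJ2 n k))

theorem hasFDeriv (R : ℝ) (x : E n) : HasFDerivAt (Fmap n R) (Dmap n R x) x := by
  apply hasFDerivAt_pi.2
  intro k
  have h1 : HasFDerivAt (fun y : E n => y.1.1 - (y.2 k).1) (pC1 n - pJ1 n k) x :=
    ((pC1 n).hasFDerivAt.sub (pJ1 n k).hasFDerivAt)
  have h2 : HasFDerivAt (fun y : E n => y.1.2 - (y.2 k).2) (pC2 n - pJ2 n k) x :=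
    ((pC2 n).hasFDerivAt.sub (pJ2 n k).hasFDerivAt)
  have h3 : HasFDerivAt (fun y : E n => (y.2 k).1 - (Bpt n R k).1) (pJ1 n k) x := by
    exact (pJ1 n k).hasFDerivAt.sub_const (Bpt n R k).1
  have h4 : HasFDerivAt (fun y : E n => (y.2 k).2 - (Bpt n R k).2) (pJ2 n k) x := by
    exact (pJ2 n k).hasFDerivAt.sub_const (Bpt n R k).2
  have hfst : HasFDerivAt (fun y : E n => (y.1.1 - (y.2 k).1) ^ 2 + (y.1.2 - (y.2 k).2) ^ 2 - 1)
      ((2 * (x.1.1 - (x.2 k).1)) • (pC1 n - pJ1 n k) +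
       (2 * (x.1.2 - (x.2 k).2)) • (pC2 n - pJ2 n k)) x := by
    have := (((h1.mul h1).add (h2.mul h2)).sub_const 1)
    refine (this.congr_fderiv ?_).congr_of_eventuallyEq (Filter.Eventually.of_forall fun y => ?_)
    · ext v <;> simp <;> ring
    · simp only [Pi.mul_apply, Pi.add_apply]; ring
  have hsnd : HasFDerivAt
      (fun y : E n => ((y.2 k).1 - (Bpt n R k).1) ^ 2 + ((y.2 k).2 - (Bpt n R k).2) ^ 2 - 1)
      ((2 * ((x.2 k).1 - (Bpt n R k).1)) • pJ1 n k +
       (2 * ((x.2 k).2 - (Bpt n R k).2)) • pJ2 n k) x := by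
    have := (((h3.mul h3).add (h4.mul h4)).sub_const 1)
    refine (this.congr_fderiv ?_).congr_of_eventuallyEq (Filter.Eventually.of_forall fun y => ?_)
    · ext v <;> simp <;> ring
    · simp only [Pi.mul_apply, Pi.add_apply]; ring
  exact hfst.prodMk hsnd

theorem fderiv_eq (R : ℝ) (x : E n) : fderiv ℝ (Fmap n R) x = Dmap n R x :=
  (hasFDeriv n R x).fderiv

theorem Dmap_apply (R : ℝ) (x : E n) (u : ℝ × ℝ) (v : Fin n → ℝ × ℝ) (k : Fin n) :
    Dmap n R x (u, v) k =
      (2 * ((x.1.1 - (x.2 k).1) * (u.1 - (v k).1) + (x.1.2 - (x.2 k).2) * (u.2 - (v k).2)),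
       2 * (((x.2 k).1 - (Bpt n R k).1) * (v k).1 + ((x.2 k).2 - (Bpt n R k).2) * (v k).2)) := by
  simp [Dmap, pC1, pC2, pJ1, pJ2]
  constructor <;> ring




variable {n : ℕ}

theorem single_decomp (k : Fin n) (w : ℝ × ℝ) :
    (Pi.single k w : Fin n → ℝ × ℝ) =
      w.1 • (Pi.single k ((1 : ℝ), (0 : ℝ)) : Fin n → ℝ × ℝ)
      + w.2 • (Pi.single k ((0 : ℝ), (1 : ℝ)) : Fin n → ℝ × ℝ) := by
  funext j
  rcases eq_or_ne j k with rfl | hj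
  · simp [Prod.ext_iff]
  · simp [Pi.single_eq_of_ne hj]

theorem dual_decomp (f : Module.Dual ℝ (Fin n → ℝ × ℝ)) (y : Fin n → ℝ × ℝ) :
    f y = ∑ k, ((y k).1 * f (Pi.single k (1, 0)) + (y k).2 * f (Pi.single k (0, 1))) := by
  have hy : y = ∑ k, Pi.single k (y k) := by
    simp [Finset.univ_sum_single]
  conv_lhs => rw [hy]
  rw [map_sum]
  congr 1; funext k
  rw [single_decomp k (y k), map_add, map_smul, map_smul]
  simp [mul_comm]



theorem not_surj_iff (R : ℝ) (x : E n) :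
    ¬ Function.Surjective (Dmap n R x) ↔
      ∃ lam mu : Fin n → ℝ,
        (∃ l, lam l ≠ 0 ∨ mu l ≠ 0) ∧
        (∑ i, lam i * (x.1.1 - (x.2 i).1) = 0) ∧
        (∑ i, lam i * (x.1.2 - (x.2 i).2) = 0) ∧
        (∀ k, lam k * (x.1.1 - (x.2 k).1) = mu k * ((x.2 k).1 - (Bpt n R k).1) ∧
              lam k * (x.1.2 - (x.2 k).2) = mu k * ((x.2 k).2 - (Bpt n R k).2)) := by
  constructor
  · intro hns
    have hlt : LinearMap.range ((Dmap n R x : E n →L[ℝ] (Fin n → ℝ × ℝ)) :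
        E n →ₗ[ℝ] (Fin n → ℝ × ℝ)) < ⊤ := by
      rcases lt_or_eq_of_le (le_top (a := LinearMap.range ((Dmap n R x : E n →L[ℝ] _) :
        E n →ₗ[ℝ] (Fin n → ℝ × ℝ)))) with h | h
      · exact h
      · exact absurd (LinearMap.range_eq_top.1 h) hns
    obtain ⟨f, hf, hfmap⟩ := Submodule.exists_dual_map_eq_bot_of_lt_top hlt inferInstance
    have hf0 : ∀ z : E n, f (Dmap n R x z) = 0 := by
      intro z
      have hmem : f (Dmap n R x z) ∈ Submodule.map f
          (LinearMap.range ((Dmap n R x : E n →L[ℝ] _) : E n →ₗ[ℝ] (Fin n → ℝ × ℝ))) :=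
        Submodule.mem_map_of_mem (LinearMap.mem_range.2 ⟨z, rfl⟩)
      rw [hfmap] at hmem
      simpa using hmem
    refine ⟨fun k => f (Pi.single k (1, 0)), fun k => f (Pi.single k (0, 1)), ?_, ?_, ?_, ?_⟩
    · by_contra h
      push_neg at h
      apply hf
      apply LinearMap.ext
      intro y
      rw [SpiderAux.dual_decomp]
      simp only [LinearMap.zero_apply]
      apply Finset.sum_eq_zero
      intro k _
      rw [(h k).1, (h k).2]; ring
    · have h := hf0 ((1, 0), 0)
      rw [SpiderAux.dual_decomp] at h
      have hsum : ∑ k, (((Dmap n R x) (((1, 0) : ℝ × ℝ), 0) k).1 * f (Pi.single k (1, 0)) +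
          ((Dmap n R x) (((1, 0) : ℝ × ℝ), 0) k).2 * f (Pi.single k (0, 1)))
          = ∑ k, ((2 : ℝ) * (x.1.1 - (x.2 k).1)) * f (Pi.single k (1, 0)) := by
        apply Finset.sum_congr rfl
        intro k _
        rw [Dmap_apply]
        norm_num
      rw [hsum] at h
      have h2 := h
      have h3 : (2 : ℝ) * ∑ k, f (Pi.single k (1, 0)) * (x.1.1 - (x.2 k).1)
          = ∑ k, ((2 : ℝ) * (x.1.1 - (x.2 k).1)) * f (Pi.single k (1, 0)) := by
        rw [Finset.mul_sum]
        exact Finset.sum_congr rfl fun k _ => by ring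
      rw [h2] at h3
      linarith
    · have h := hf0 ((0, 1), 0)
      rw [SpiderAux.dual_decomp] at h
      have hsum : ∑ k, (((Dmap n R x) (((0, 1) : ℝ × ℝ), 0) k).1 * f (Pi.single k (1, 0)) +
          ((Dmap n R x) (((0, 1) : ℝ × ℝ), 0) k).2 * f (Pi.single k (0, 1)))
          = ∑ k, ((2 : ℝ) * (x.1.2 - (x.2 k).2)) * f (Pi.single k (1, 0)) := by
        apply Finset.sum_congr rfl
        intro k _
        rw [Dmap_apply]
        norm_num
      rw [hsum] at h
      have h2 := h
      have h3 : (2 : ℝ) * ∑ k, f (Pi.single k (1, 0)) * (x.1.2 - (x.2 k).2)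
          = ∑ k, ((2 : ℝ) * (x.1.2 - (x.2 k).2)) * f (Pi.single k (1, 0)) := by
        rw [Finset.mul_sum]
        exact Finset.sum_congr rfl fun k _ => by ring
      rw [h2] at h3
      linarith
    · intro k
      constructor
      · have h := hf0 (0, Pi.single k ((1 : ℝ), (0 : ℝ)))
        rw [SpiderAux.dual_decomp] at h
        rw [Finset.sum_eq_single k] at h
        · rw [Dmap_apply] at h
          simp [Pi.single_eq_same] at h
          linarith
        · intro j _ hj
          rw [Dmap_apply]
          simp [Pi.single_eq_of_ne hj]
        · intro hk; exact absurd (Finset.mem_univ k) hk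
      · have h := hf0 (0, Pi.single k ((0 : ℝ), (1 : ℝ)))
        rw [SpiderAux.dual_decomp] at h
        rw [Finset.sum_eq_single k] at h
        · rw [Dmap_apply] at h
          simp [Pi.single_eq_same] at h
          linarith
        · intro j _ hj
          rw [Dmap_apply]
          simp [Pi.single_eq_of_ne hj]
        · intro hk; exact absurd (Finset.mem_univ k) hk
  · rintro ⟨lam, mu, ⟨l0, hl0⟩, hs1, hs2, hc⟩ hsurj
    obtain ⟨⟨u, v⟩, huv⟩ := hsurj (Pi.single l0 (lam l0, mu l0))
    have e1 : ∑ k, (lam k * ((Dmap n R x (u, v)) k).1 + mu k * ((Dmap n R x (u, v)) k).2)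
        = lam l0 ^ 2 + mu l0 ^ 2 := by
      rw [huv, Finset.sum_eq_single l0]
      · simp [Pi.single_eq_same]; ring
      · intro j _ hj; simp [Pi.single_eq_of_ne hj]
      · intro hk; exact absurd (Finset.mem_univ l0) hk
    have e2 : ∑ k, (lam k * ((Dmap n R x (u, v)) k).1 + mu k * ((Dmap n R x (u, v)) k).2)
        = 0 := by
      have hcong : ∀ k ∈ Finset.univ, (lam k * ((Dmap n R x (u, v)) k).1
          + mu k * ((Dmap n R x (u, v)) k).2)
          = 2 * u.1 * (lam k * (x.1.1 - (x.2 k).1)) + 2 * u.2 * (lam k * (x.1.2 - (x.2 k).2)) := by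
        intro k _
        rw [Dmap_apply]
        have h1 := (hc k).1
        have h2 := (hc k).2
        simp only
        linear_combination (-2 : ℝ) * (v k).1 * h1 + (-2 : ℝ) * (v k).2 * h2
      rw [Finset.sum_congr rfl hcong, Finset.sum_add_distrib, ← Finset.mul_sum, ← Finset.mul_sum,
        hs1, hs2]
      ring
    rw [e1] at e2
    rcases hl0 with h | h
    · nlinarith [sq_nonneg (lam l0), sq_nonneg (mu l0), sq_pos_of_ne_zero h]
    · nlinarith [sq_nonneg (lam l0), sq_nonneg (mu l0), sq_pos_of_ne_zero h]


/-- `cc n d = cos (2πd/n)`. -/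
noncomputable def cc (n : ℕ) (d : ℤ) : ℝ := Real.cos (2 * (d : ℝ) * π / n)

theorem cc_mod (n : ℕ) (hn : 0 < n) (d : ℤ) : cc n (d % n) = cc n d := by
  unfold cc
  have hne : (n : ℝ) ≠ 0 := Nat.cast_ne_zero.2 hn.ne'
  have h : ((d % n : ℤ) : ℝ) + (n : ℝ) * ((d / n : ℤ) : ℝ) = (d : ℝ) := by
    exact_mod_cast congrArg (fun z : ℤ => (z : ℝ)) (Int.emod_add_mul_ediv d (n : ℤ))
  have key : 2 * (d : ℝ) * π / n = 2 * ((d % n : ℤ) : ℝ) * π / n + ((d / n : ℤ) : ℝ) * (2 * π) := by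
    have h2 : ((d / n : ℤ) : ℝ) * (2 * π) = (((d / n : ℤ) : ℝ) * (2 * π) * n) / n := by
      field_simp
    rw [h2, ← add_div]
    congr 1
    linear_combination (-2 * π) * h
  rw [key, Real.cos_add_int_mul_two_pi]

theorem cc_neg (n : ℕ) (d : ℤ) : cc n (-d) = cc n d := by
  unfold cc
  rw [show 2 * ((-d : ℤ) : ℝ) * π / n = -(2 * (d : ℝ) * π / n) by push_cast; ring, Real.cos_neg]

/-- chord length formula -/
theorem chord_sq (n : ℕ) (R : ℝ) (i j : Fin n) :
    ((Bpt n R i).1 - (Bpt n R j).1) ^ 2 + ((Bpt n R i).2 - (Bpt n R j).2) ^ 2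
      = 2 * R ^ 2 * (1 - cc n ((i.val : ℤ) - (j.val : ℤ))) := by
  unfold Bpt cc
  have h1 : Real.cos (2 * (((i.val : ℤ) - (j.val : ℤ) : ℤ) : ℝ) * π / n)
      = Real.cos (2 * (i.val : ℝ) * π / n) * Real.cos (2 * (j.val : ℝ) * π / n)
        + Real.sin (2 * (i.val : ℝ) * π / n) * Real.sin (2 * (j.val : ℝ) * π / n) := by
    rw [← Real.cos_sub]
    congr 1
    push_cast
    ring
  have p1 := Real.sin_sq_add_cos_sq (2 * (i.val : ℝ) * π / n)
  have p2 := Real.sin_sq_add_cos_sq (2 * (j.val : ℝ) * π / n)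
  simp only
  nlinarith [h1, p1, p2]





noncomputable def KK (n : ℕ) : ℝ := 2 - 2 * cc n ((n / 2 : ℕ) : ℤ)

theorem cc_half_even (n : ℕ) (hn : 0 < n) (he : Even n) : cc n ((n / 2 : ℕ) : ℤ) = -1 := by
  unfold cc
  have h2 : (2 : ℝ) * ((n / 2 : ℕ) : ℤ) = (n : ℝ) := by
    obtain ⟨m, rfl⟩ := he
    push_cast [Nat.add_mul_div_left, (by omega : (m + m) / 2 = m)]
    ring
  rw [show 2 * (((n / 2 : ℕ) : ℤ) : ℝ) * π / n = (2 * (((n / 2 : ℕ) : ℤ) : ℝ)) * π / n by ring, h2]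
  rw [show (n : ℝ) * π / n = π by field_simp, Real.cos_pi]

theorem cc_ge (n : ℕ) (hn : 2 ≤ n) (d : ℤ) : cc n ((n / 2 : ℕ) : ℤ) ≤ cc n d := by
  have hn0 : 0 < n := by omega
  have hnR : (0 : ℝ) < n := by exact_mod_cast hn0
  rcases Nat.even_or_odd n with he | ho
  · rw [cc_half_even n hn0 he]
    exact Real.neg_one_le_cos _
  · obtain ⟨w, hw⟩ := ho
    set m : ℕ := n / 2 with hm
    have hn2m : n = 2 * m + 1 := by omega
    have base : ∀ r : ℤ, 0 ≤ r → r ≤ (m : ℤ) → cc n (m : ℤ) ≤ cc n r := by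
      intro r h0 hr
      have h0R : (0 : ℝ) ≤ (r : ℝ) := by exact_mod_cast h0
      have hrR : (r : ℝ) ≤ (m : ℝ) := by exact_mod_cast hr
      unfold cc
      have hmR : 2 * (m : ℝ) + 1 = n := by exact_mod_cast hn2m.symm
      apply Real.cos_le_cos_of_nonneg_of_le_pi
      · positivity
      · rw [div_le_iff₀ hnR]
        push_cast
        nlinarith [Real.pi_pos]
      · gcongr
    have h1 : cc n d = cc n (d % n) := (cc_mod n hn0 d).symm
    have hne : ((n : ℤ) : ℝ) ≠ 0 := by exact_mod_cast hnR.ne'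
    have hr0 : 0 ≤ d % n := Int.emod_nonneg d (by exact_mod_cast hn0.ne')
    have hrn : d % n < n := Int.emod_lt_of_pos d (by exact_mod_cast hn0)
    by_cases hrm : d % n ≤ (m : ℤ)
    · rw [h1]; exact base _ hr0 hrm
    · have h2 : cc n (d % n) = cc n ((n : ℤ) - d % n) := by
        unfold cc
        rw [← Real.cos_two_pi_sub]
        congr 1
        push_cast
        field_simp
      rw [h1, h2]
      exact base _ (by omega) (by push_cast; omega)

theorem cc_le_one (n : ℕ) (d : ℤ) : cc n d ≤ 1 := Real.cos_le_one _

theorem KK_le_four (n : ℕ) (hn : 2 ≤ n) : KK n ≤ 4 := by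
  have := Real.neg_one_le_cos (2 * (((n / 2 : ℕ) : ℤ) : ℝ) * π / n)
  unfold KK cc
  linarith

theorem KK_pos (n : ℕ) (hn : 2 ≤ n) : 0 < KK n := by
  have hn0 : 0 < n := by omega
  have hnR : (0 : ℝ) < n := by exact_mod_cast hn0
  unfold KK
  rcases Nat.even_or_odd n with he | ho
  · rw [cc_half_even n hn0 he]; norm_num
  · obtain ⟨w, hw⟩ := ho
    set m : ℕ := n / 2 with hm
    have hn2m : n = 2 * m + 1 := by omega
    have hm1 : 1 ≤ m := by omega
    have : cc n (m : ℤ) < 1 := by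
      unfold cc
      have h0 : (0 : ℝ) < 2 * ((m : ℤ) : ℝ) * π / n := by
        have : (0:ℝ) < (m:ℝ) := by exact_mod_cast hm1
        push_cast
        positivity
      calc Real.cos (2 * ((m : ℤ) : ℝ) * π / n) < Real.cos 0 := by
            apply Real.cos_lt_cos_of_nonneg_of_le_pi le_rfl ?_ h0
            rw [div_le_iff₀ hnR]
            have hmR : 2 * (m : ℝ) + 1 = n := by exact_mod_cast hn2m.symm
            push_cast
            nlinarith [Real.pi_pos]
        _ = 1 := Real.cos_zero
    linarith

theorem cc_eq_one_zmod (n : ℕ) (hn : 0 < n) (d : ℤ) (h : cc n d = 1) :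
    (d : ZMod n) = 0 := by
  have hnR : (0 : ℝ) < n := by exact_mod_cast hn
  obtain ⟨q, hq⟩ := (Real.cos_eq_one_iff _).1 h
  have hq2 : (q : ℝ) * (2 * π) * n = 2 * (d : ℝ) * π := by
    rw [hq]; field_simp
  have hq3 : ((q * n : ℤ) : ℝ) * (2 * π) = ((d : ℤ) : ℝ) * (2 * π) := by
    push_cast; linarith
  have hq4 : (q * n : ℤ) = d := by
    have h2pi : (2 : ℝ) * π ≠ 0 := by positivity
    exact_mod_cast mul_right_cancel₀ h2pi hq3
  rw [← hq4]
  push_cast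
  simp

theorem cc_eq_neg_one_zmod (n : ℕ) (hn : 0 < n) (he : Even n) (d : ℤ)
    (h : cc n d = -1) : (d : ZMod n) = ((n / 2 : ℕ) : ZMod n) := by
  have hnR : (0 : ℝ) < n := by exact_mod_cast hn
  have hs : Real.sin (2 * (d : ℝ) * π / n) = 0 := by
    have := Real.sin_sq_add_cos_sq (2 * (d : ℝ) * π / n)
    unfold cc at h
    nlinarith
  obtain ⟨q, hq⟩ := Real.sin_eq_zero_iff.1 hs
  have hq2 : (q : ℝ) * π * n = 2 * (d : ℝ) * π := by
    rw [hq]; field_simp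
  have hq3 : ((q * n : ℤ) : ℝ) * π = ((2 * d : ℤ) : ℝ) * π := by
    push_cast; linarith
  have hq4 : (q * n : ℤ) = 2 * d := by
    have := mul_right_cancel₀ Real.pi_ne_zero hq3
    exact_mod_cast this
  rcases Int.even_or_odd q with ⟨t, rfl⟩ | ⟨t, rfl⟩
  · exfalso
    unfold cc at h
    rw [← hq, show ((t + t : ℤ) : ℝ) * π = (t : ℤ) * (2 * π) by push_cast; ring,
      Real.cos_int_mul_two_pi] at h
    linarith
  · obtain ⟨m, hm⟩ := he
    have hexp : (2 * t + 1) * (n : ℤ) = 2 * (t * (n : ℤ)) + (n : ℤ) := by ring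
    rw [hexp] at hq4
    have hd : d = t * (n : ℤ) + (m : ℤ) := by omega
    rw [hd]
    have hmn : (n / 2 : ℕ) = m := by omega
    rw [hmn]
    push_cast
    simp

theorem fin_eq_of_zmod {n : ℕ} (hn : 0 < n) (i j : Fin n)
    (h : ((i.val : ℕ) : ZMod n) = ((j.val : ℕ) : ZMod n)) : i = j := by
  haveI : NeZero n := ⟨hn.ne'⟩
  apply Fin.ext
  rw [← ZMod.val_cast_of_lt i.isLt, ← ZMod.val_cast_of_lt j.isLt, h]

theorem Bpt_injective (n : ℕ) (hn : 0 < n) (R : ℝ) (hR : 0 < R) (i j : Fin n)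
    (h : Bpt n R i = Bpt n R j) : i = j := by
  have hc := chord_sq n R i j
  rw [h] at hc
  simp at hc
  have hcc : cc n ((i.val : ℤ) - (j.val : ℤ)) = 1 := by
    rcases hc with hc | hc
    · exact absurd hc hR.ne'
    · linarith
  apply fin_eq_of_zmod hn
  have h0 := cc_eq_one_zmod n hn _ hcc
  push_cast at h0
  exact sub_eq_zero.1 h0




end SpiderAux


namespace SpiderAux
open Real

/-! ### scalar geometry helpers -/

theorem unit_para (a1 a2 b1 b2 l m : ℝ) (ha : a1 ^ 2 + a2 ^ 2 = 1) (hb : b1 ^ 2 + b2 ^ 2 = 1)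
    (hl : l ≠ 0) (h1 : l * a1 = m * b1) (h2 : l * a2 = m * b2) :
    (a1 = b1 ∧ a2 = b2) ∨ (a1 = -b1 ∧ a2 = -b2) := by
  have hm : l ^ 2 = m ^ 2 := by
    linear_combination (-(l^2)) * ha + (m^2) * hb + (l*a1 + m*b1) * h1 + (l*a2 + m*b2) * h2
  have hdot : l * (a1 * b1 + a2 * b2) = m := by linear_combination b1 * h1 + b2 * h2 + m * hb
  have h4 : (a1 * b1 + a2 * b2) ^ 2 = 1 := by
    have h3 : l ^ 2 * ((a1 * b1 + a2 * b2) ^ 2 - 1) = 0 := by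
      linear_combination (l * (a1*b1+a2*b2) + m) * hdot - hm
    have := pow_ne_zero 2 hl
    rcases mul_eq_zero.1 h3 with h5 | h5
    · exact absurd h5 this
    · linarith
  rcases mul_self_eq_one_iff.1 (show (a1*b1+a2*b2) * (a1*b1+a2*b2) = 1 by rw [← pow_two]; exact h4) with h | h
  · left
    constructor <;> nlinarith [sq_nonneg (a1 - b1), sq_nonneg (a2 - b2)]
  · right
    constructor <;> nlinarith [sq_nonneg (a1 + b1), sq_nonneg (a2 + b2)]

theorem two_unit_cross (a1 a2 b1 b2 : ℝ) (ha : a1 ^ 2 + a2 ^ 2 = 1) (hb : b1 ^ 2 + b2 ^ 2 = 1)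
    (hx : a1 * b2 - a2 * b1 = 0) :
    (a1 = b1 ∧ a2 = b2) ∨ (a1 = -b1 ∧ a2 = -b2) := by
  have h4 : (a1 * b1 + a2 * b2) ^ 2 = 1 := by
    linear_combination (b1^2 + b2^2) * ha + hb - (a1*b2 - a2*b1) * hx
  rcases mul_self_eq_one_iff.1 (show (a1*b1+a2*b2) * (a1*b1+a2*b2) = 1 by rw [← pow_two]; exact h4) with h | h
  · left
    constructor <;> nlinarith [sq_nonneg (a1 - b1), sq_nonneg (a2 - b2)]
  · right
    constructor <;> nlinarith [sq_nonneg (a1 + b1), sq_nonneg (a2 + b2)]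

theorem stretch_of_dist (a1 a2 b1 b2 : ℝ) (ha : a1 ^ 2 + a2 ^ 2 = 1) (hb : b1 ^ 2 + b2 ^ 2 = 1)
    (h : (a1 + b1) ^ 2 + (a2 + b2) ^ 2 = 4) : a1 = b1 ∧ a2 = b2 := by
  constructor <;> nlinarith [sq_nonneg (a1 - b1), sq_nonneg (a2 - b2)]

theorem dist_le_sq (a1 a2 b1 b2 : ℝ) (ha : a1 ^ 2 + a2 ^ 2 = 1) (hb : b1 ^ 2 + b2 ^ 2 = 1) :
    (a1 + b1) ^ 2 + (a2 + b2) ^ 2 ≤ 4 := by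
  nlinarith [sq_nonneg (a1 - b1), sq_nonneg (a2 - b2)]

theorem sq2_zero {a b : ℝ} (h : a ^ 2 + b ^ 2 = 0) : a = 0 ∧ b = 0 := by
  constructor <;> nlinarith [sq_nonneg a, sq_nonneg b]

theorem parallel_half (u1 u2 v1 v2 P1 P2 : ℝ)
    (hUpos : 0 < u1 ^ 2 + u2 ^ 2) (hVpos : 0 < v1 ^ 2 + v2 ^ 2)
    (hcross : u1 * v2 - u2 * v1 = 0)
    (hup : u1 * P1 + u2 * P2 = (u1 ^ 2 + u2 ^ 2) / 2)
    (hvp : v1 * P1 + v2 * P2 = (v1 ^ 2 + v2 ^ 2) / 2) :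
    u1 = v1 ∧ u2 = v2 := by
  have hc1 : (u1^2+u2^2)*v1 = (u1*v1+u2*v2)*u1 := by linear_combination (-u2)*hcross
  have hc2 : (u1^2+u2^2)*v2 = (u1*v1+u2*v2)*u2 := by linear_combination u1*hcross
  have hd1 : (v1^2+v2^2)*u1 = (u1*v1+u2*v2)*v1 := by linear_combination v2*hcross
  have hd2 : (v1^2+v2^2)*u2 = (u1*v1+u2*v2)*v2 := by linear_combination (-v1)*hcross
  have h1 : (u1^2+u2^2)*(v1*P1+v2*P2) = (u1*v1+u2*v2)*(u1*P1+u2*P2) := by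
    linear_combination P1*hc1 + P2*hc2
  rw [hup, hvp] at h1
  have hVw : v1^2+v2^2 = u1*v1+u2*v2 := by
    have h2 : (u1^2+u2^2) * ((v1^2+v2^2) - (u1*v1+u2*v2)) = 0 := by linear_combination 2*h1
    rcases mul_eq_zero.1 h2 with h | h
    · exact absurd h hUpos.ne'
    · linarith
  have h1' : (v1^2+v2^2)*(u1*P1+u2*P2) = (u1*v1+u2*v2)*(v1*P1+v2*P2) := by
    linear_combination P1*hd1 + P2*hd2
  rw [hup, hvp] at h1'
  have hUw : u1^2+u2^2 = u1*v1+u2*v2 := by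
    have h2 : (v1^2+v2^2) * ((u1^2+u2^2) - (v1^2+v2^2)) = 0 := by
      linear_combination 2*h1' - (v1^2+v2^2)*hVw
    rcases mul_eq_zero.1 h2 with h | h
    · exact absurd h hVpos.ne'
    · linarith [hVw]
  have hzero : (u1 - v1) ^ 2 + (u2 - v2) ^ 2 = 0 := by linear_combination hUw + hVw
  obtain ⟨z1, z2⟩ := sq2_zero hzero
  exact ⟨by linarith, by linarith⟩

/-- A line meets a circle in at most two points. -/
theorem three_pts (C1 C2 p1 p2 q1 q2 s1 s2 RR : ℝ)
    (hC : C1 ≠ 0 ∨ C2 ≠ 0)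
    (hp : p1 ^ 2 + p2 ^ 2 = RR) (hq : q1 ^ 2 + q2 ^ 2 = RR) (hs : s1 ^ 2 + s2 ^ 2 = RR)
    (hcp : (C1 - p1) ^ 2 + (C2 - p2) ^ 2 = 4) (hcq : (C1 - q1) ^ 2 + (C2 - q2) ^ 2 = 4)
    (hcs : (C1 - s1) ^ 2 + (C2 - s2) ^ 2 = 4)
    (hpq : ¬(p1 = q1 ∧ p2 = q2)) (hps : ¬(p1 = s1 ∧ p2 = s2)) :
    q1 = s1 ∧ q2 = s2 := by
  have hUpos : 0 < (p1 - q1) ^ 2 + (p2 - q2) ^ 2 := by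
    rcases lt_or_eq_of_le (by positivity : (0:ℝ) ≤ (p1 - q1) ^ 2 + (p2 - q2) ^ 2) with h | h
    · exact h
    · exfalso; apply hpq
      obtain ⟨z1, z2⟩ := sq2_zero h.symm
      exact ⟨by linarith, by linarith⟩
  have hVpos : 0 < (p1 - s1) ^ 2 + (p2 - s2) ^ 2 := by
    rcases lt_or_eq_of_le (by positivity : (0:ℝ) ≤ (p1 - s1) ^ 2 + (p2 - s2) ^ 2) with h | h
    · exact h
    · exfalso; apply hps
      obtain ⟨z1, z2⟩ := sq2_zero h.symm
      exact ⟨by linarith, by linarith⟩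
  have huC : (p1 - q1) * C1 + (p2 - q2) * C2 = 0 := by
    linear_combination (-(1:ℝ)/2) * (hcp - hcq - hp + hq)
  have hvC : (p1 - s1) * C1 + (p2 - s2) * C2 = 0 := by
    linear_combination (-(1:ℝ)/2) * (hcp - hcs - hp + hs)
  have hcross : (p1 - q1) * (p2 - s2) - (p2 - q2) * (p1 - s1) = 0 := by
    have hCsq : 0 < C1 ^ 2 + C2 ^ 2 := by
      rcases hC with h | h <;> positivity
    have hz : ((p1 - q1) * (p2 - s2) - (p2 - q2) * (p1 - s1)) * (C1 ^ 2 + C2 ^ 2) = 0 := by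
      linear_combination ((p2 - s2) * C1 - (p1 - s1) * C2) * huC
        - ((p2 - q2) * C1 - (p1 - q1) * C2) * hvC
    rcases mul_eq_zero.1 hz with h | h
    · exact h
    · exact absurd h hCsq.ne'
  have hup : (p1 - q1) * p1 + (p2 - q2) * p2 = ((p1 - q1) ^ 2 + (p2 - q2) ^ 2) / 2 := by
    linear_combination ((1:ℝ)/2) * (hp - hq)
  have hvp : (p1 - s1) * p1 + (p2 - s2) * p2 = ((p1 - s1) ^ 2 + (p2 - s2) ^ 2) / 2 := by
    linear_combination ((1:ℝ)/2) * (hp - hs)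
  obtain ⟨e1, e2⟩ := parallel_half _ _ _ _ _ _ hUpos hVpos hcross hup hvp
  constructor <;> linarith

/-! ### sums -/

theorem sum_one {n : ℕ} (f : Fin n → ℝ) (k : Fin n)
    (h0 : ∀ l, l ≠ k → f l = 0) : ∑ l, f l = f k :=
  Finset.sum_eq_single k (fun b _ hb => h0 b hb) (fun h => absurd (Finset.mem_univ k) h)

theorem sum_two {n : ℕ} (f : Fin n → ℝ) (k j : Fin n) (hkj : k ≠ j)
    (h0 : ∀ l, l ≠ k → l ≠ j → f l = 0) : ∑ l, f l = f k + f j := by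
  rw [← Finset.sum_subset (Finset.subset_univ {k, j})]
  · rw [Finset.sum_pair hkj]
  · intro y _ hy
    simp only [Finset.mem_insert, Finset.mem_singleton] at hy
    push_neg at hy
    exact h0 y hy.1 hy.2

theorem sum_three {n : ℕ} (f : Fin n → ℝ) (k i j : Fin n) (hki : k ≠ i) (hkj : k ≠ j)
    (hij : i ≠ j) (h0 : ∀ l, l ≠ k → l ≠ i → l ≠ j → f l = 0) :
    ∑ l, f l = f k + f i + f j := by
  rw [← Finset.sum_subset (Finset.subset_univ {k, i, j})]
  · rw [Finset.sum_insert (by simp [hki, hkj]), Finset.sum_pair hij]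
    ring
  · intro y _ hy
    simp only [Finset.mem_insert, Finset.mem_singleton] at hy
    push_neg at hy
    exact h0 y hy.1 hy.2.1 hy.2.2

/-! ### enorm2 and Bpt -/

theorem enorm2_eq_two {v : ℝ × ℝ} (h : v.1 ^ 2 + v.2 ^ 2 = 4) : enorm2 v = 2 := by
  unfold enorm2
  rw [h, show (4:ℝ) = 2 ^ 2 by norm_num, Real.sqrt_sq (by norm_num : (0:ℝ) ≤ 2)]

theorem sq_of_enorm2_two {v : ℝ × ℝ} (h : enorm2 v = 2) : v.1 ^ 2 + v.2 ^ 2 = 4 := by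
  have h2 : Real.sqrt (v.1 ^ 2 + v.2 ^ 2) = 2 := h
  have h3 := congrArg (· ^ 2) h2
  rw [Real.sq_sqrt (by positivity)] at h3
  norm_num at h3
  exact h3

theorem Bpt_norm_sq (n : ℕ) (R : ℝ) (k : Fin n) :
    (Bpt n R k).1 ^ 2 + (Bpt n R k).2 ^ 2 = R ^ 2 := by
  unfold Bpt
  simp only
  nlinarith [Real.sin_sq_add_cos_sq (2 * (k.val : ℝ) * π / n)]

theorem cc_ge_neg_one (n : ℕ) (d : ℤ) : -1 ≤ cc n d := Real.neg_one_le_cos _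

theorem dmax_eq (n : ℕ) (hn : 0 < n) : dmax n = Real.sqrt (KK n) := by
  unfold dmax
  split_ifs with h
  · rw [show KK n = 4 from by unfold KK; rw [cc_half_even n hn h]; ring]
    rw [show (4:ℝ) = 2 ^ 2 by norm_num, Real.sqrt_sq (by norm_num : (0:ℝ) ≤ 2)]
  · exact (congrArg Real.sqrt (show 2 - 2 * Real.cos (2 * ((n / 2 : ℕ) : ℝ) * π / n) = KK n by
      unfold KK cc; norm_cast)).symm

theorem Rcrit_eq (n : ℕ) (hn : 0 < n) : Rcrit n = 2 / Real.sqrt (KK n) := by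
  unfold Rcrit; rw [dmax_eq n hn]

/-- From `R^2 * KK n = 4` conclude `R = Rcrit n`. -/
theorem R_eq_Rcrit (n : ℕ) (hn : 2 ≤ n) (R : ℝ) (hR : 0 < R) (h : R ^ 2 * KK n = 4) :
    R = Rcrit n := by
  have hK := KK_pos n hn
  have hsK : 0 < Real.sqrt (KK n) := Real.sqrt_pos.2 hK
  have hs2 : Real.sqrt (KK n) ^ 2 = KK n := Real.sq_sqrt hK.le
  rw [Rcrit_eq n (by omega)]
  have h2 : (R * Real.sqrt (KK n)) ^ 2 = 2 ^ 2 := by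
    rw [mul_pow, hs2]; linarith
  have h3 : R * Real.sqrt (KK n) = 2 := by
    nlinarith [mul_pos hR hsK]
  field_simp
  linarith [h3]

theorem emod_helper (n : ℕ) (d e : ℤ) (t : ℤ) (h : d - e = n * t) : d % n = e % n := by
  have hd : d = e + (n : ℤ) * t := by linarith
  rw [hd, Int.add_mul_emod_self_left]

theorem cc_congr (n : ℕ) (hn : 0 < n) (d e : ℤ) (h : d % n = e % n) : cc n d = cc n e := by
  rw [← cc_mod n hn d, ← cc_mod n hn e, h]


theorem cc_sub_mod (n : ℕ) (hn : 0 < n) (a t : ℕ) :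
    cc n ((a : ℤ) - (((a + t) % n : ℕ) : ℤ)) = cc n (-(t : ℤ)) := by
  apply cc_congr n hn
  apply emod_helper n _ _ (((a + t) / n : ℕ) : ℤ)
  have hdm := Nat.div_add_mod (a + t) n
  have h2 : (n : ℤ) * (((a + t) / n : ℕ) : ℤ) + (((a + t) % n : ℕ) : ℤ)
      = (a : ℤ) + (t : ℤ) := by exact_mod_cast hdm
  linarith

theorem cc_neg_succ_half (n : ℕ) (hn : 0 < n) (ho : Odd n) :
    cc n (-(((n / 2 + 1 : ℕ)) : ℤ)) = cc n (((n / 2 : ℕ)) : ℤ) := by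
  apply cc_congr n hn
  apply emod_helper n _ _ (-1)
  obtain ⟨w, hw⟩ := ho
  push_cast
  omega

end SpiderAux

open SpiderAux
set_option maxHeartbeats 2000000

/-- For `0 < R < 2` and `x ∈ M_n(R) = F⁻¹(0)`, the Fréchet derivative of `F` at `x`
fails to be surjective iff `R = R_n` and either
(i) `n` is even and for some `k` the body is at `B_k`, the `(k + n/2)`-th arm is
stretched out, and `J_k` lies on the line through `B_k` and `B_{k+n/2}`; or
(ii) `n` is odd and for some `k` the body is at `B_k` and two distinct arms are
stretched out. -/
theorem stmt5 (n : ℕ) (hn : 2 ≤ n) (R : ℝ) (hR0 : 0 < R) (hR2 : R < 2)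
    (x : (ℝ × ℝ) × (Fin n → ℝ × ℝ)) (hx : Fmap n R x = 0) :
    ¬ Function.Surjective (fderiv ℝ (Fmap n R) x) ↔
      (R = Rcrit n ∧
        ((Even n ∧ ∃ k j : Fin n,
            ((j : ℕ) : ZMod n) = ((k : ℕ) : ZMod n) + ((n / 2 : ℕ) : ZMod n) ∧
            x.1 = Bpt n R k ∧ enorm2 (x.1 - Bpt n R j) = 2 ∧
            ((x.2 k).1 - (Bpt n R k).1) * ((Bpt n R j).2 - (Bpt n R k).2) -
              ((x.2 k).2 - (Bpt n R k).2) * ((Bpt n R j).1 - (Bpt n R k).1) = 0) ∨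
         (Odd n ∧ ∃ k : Fin n, x.1 = Bpt n R k ∧
            ∃ i j : Fin n, i ≠ j ∧ enorm2 (x.1 - Bpt n R i) = 2 ∧
              enorm2 (x.1 - Bpt n R j) = 2))) := by
  have hn0 : 0 < n := by omega
  have hunit : ∀ k : Fin n,
      (x.1.1 - (x.2 k).1) ^ 2 + (x.1.2 - (x.2 k).2) ^ 2 = 1 ∧
      ((x.2 k).1 - (Bpt n R k).1) ^ 2 + ((x.2 k).2 - (Bpt n R k).2) ^ 2 = 1 := by
    intro k
    have h := congrFun hx k
    have h1 := congrArg Prod.fst h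
    have h2 := congrArg Prod.snd h
    simp only [Fmap, Pi.zero_apply, Prod.fst_zero, Prod.snd_zero] at h1 h2
    constructor <;> linarith
  have hdistle : ∀ i : Fin n,
      (x.1.1 - (Bpt n R i).1) ^ 2 + (x.1.2 - (Bpt n R i).2) ^ 2 ≤ 4 := by
    intro i
    have h := dist_le_sq _ _ _ _ (hunit i).1 (hunit i).2
    have e1 : x.1.1 - (Bpt n R i).1
        = (x.1.1 - (x.2 i).1) + ((x.2 i).1 - (Bpt n R i).1) := by ring
    have e2 : x.1.2 - (Bpt n R i).2
        = (x.1.2 - (x.2 i).2) + ((x.2 i).2 - (Bpt n R i).2) := by ring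
    rw [e1, e2]
    exact h
  have hKKdef : KK n = 2 - 2 * cc n ((n / 2 : ℕ) : ℤ) := rfl
  rw [SpiderAux.fderiv_eq n R x, SpiderAux.not_surj_iff R x]
  constructor
  · rintro ⟨lam, mu, ⟨l0, hl0⟩, hs1, hs2, hc⟩
    have hlam_ex : ∃ l, lam l ≠ 0 := by
      by_cases hl : lam l0 = 0
      · rcases hl0 with h | h
        · exact ⟨l0, h⟩
        · exfalso
          apply h
          have h1 := (hc l0).1
          have h2 := (hc l0).2
          rw [hl, zero_mul] at h1 h2
          have hb := (hunit l0).2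
          have : mu l0 ^ 2 = 0 := by nlinarith [h1, h2, hb]
          exact pow_eq_zero_iff two_ne_zero |>.1 this
      · exact ⟨l0, hl⟩
    clear hl0
    have hdich : ∀ l, lam l ≠ 0 →
        (x.1.1 - (x.2 l).1 = (x.2 l).1 - (Bpt n R l).1 ∧
         x.1.2 - (x.2 l).2 = (x.2 l).2 - (Bpt n R l).2)
        ∨ (x.1.1 = (Bpt n R l).1 ∧ x.1.2 = (Bpt n R l).2) := by
      intro l hl
      rcases unit_para _ _ _ _ _ _ (hunit l).1 (hunit l).2 hl (hc l).1 (hc l).2 with h | h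
      · exact Or.inl h
      · right
        constructor <;> linarith [h.1, h.2]
    have hstr_dist : ∀ l : Fin n,
        x.1.1 - (x.2 l).1 = (x.2 l).1 - (Bpt n R l).1 →
        x.1.2 - (x.2 l).2 = (x.2 l).2 - (Bpt n R l).2 →
        (x.1.1 - (Bpt n R l).1) ^ 2 + (x.1.2 - (Bpt n R l).2) ^ 2 = 4 := by
      intro l e1 e2
      have hu := (hunit l).1
      have g1 : x.1.1 - (Bpt n R l).1 = 2 * (x.1.1 - (x.2 l).1) := by linarith
      have g2 : x.1.2 - (Bpt n R l).2 = 2 * (x.1.2 - (x.2 l).2) := by linarith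
      rw [g1, g2]
      linear_combination 4 * hu
    have hsecond : ∀ k' : Fin n, lam k' ≠ 0 → ∃ l1, lam l1 ≠ 0 ∧ l1 ≠ k' := by
      intro k' hk'
      by_contra hno2
      push_neg at hno2
      have hz1 : ∀ l, l ≠ k' → lam l * (x.1.1 - (x.2 l).1) = 0 := by
        intro l hl
        rcases eq_or_ne (lam l) 0 with h | h
        · rw [h, zero_mul]
        · exact absurd (hno2 l h) hl
      have hz2 : ∀ l, l ≠ k' → lam l * (x.1.2 - (x.2 l).2) = 0 := by
        intro l hl
        rcases eq_or_ne (lam l) 0 with h | h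
        · rw [h, zero_mul]
        · exact absurd (hno2 l h) hl
      rw [sum_one _ k' hz1] at hs1
      rw [sum_one _ k' hz2] at hs2
      have ha1 : x.1.1 - (x.2 k').1 = 0 := by
        rcases mul_eq_zero.1 hs1 with h | h
        · exact absurd h hk'
        · exact h
      have ha2 : x.1.2 - (x.2 k').2 = 0 := by
        rcases mul_eq_zero.1 hs2 with h | h
        · exact absurd h hk'
        · exact h
      have := (hunit k').1
      rw [ha1, ha2] at this
      norm_num at this
    have hfold : ∃ k, lam k ≠ 0 ∧ x.1.1 = (Bpt n R k).1 ∧ x.1.2 = (Bpt n R k).2 := by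
      by_contra hno
      push_neg at hno
      have hstr : ∀ l, lam l ≠ 0 →
          (x.1.1 - (x.2 l).1 = (x.2 l).1 - (Bpt n R l).1 ∧
           x.1.2 - (x.2 l).2 = (x.2 l).2 - (Bpt n R l).2) := by
        intro l hl
        rcases hdich l hl with h | h
        · exact h
        · exact absurd h.2 (hno l hl h.1)
      obtain ⟨p0, hp0⟩ := hlam_ex
      have hCne : x.1.1 ≠ 0 ∨ x.1.2 ≠ 0 := by
        by_contra hcc
        push_neg at hcc
        have hd := hstr_dist p0 (hstr p0 hp0).1 (hstr p0 hp0).2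
        have hB := Bpt_norm_sq n R p0
        rw [hcc.1, hcc.2] at hd
        nlinarith [hB, hd, hR0, hR2]
      obtain ⟨l1, hl1, hl1ne⟩ := hsecond p0 hp0
      have hsub : ∀ l, lam l ≠ 0 → l = p0 ∨ l = l1 := by
        intro l hl
        by_contra hno3
        push_neg at hno3
        have hqj := three_pts x.1.1 x.1.2 (Bpt n R l).1 (Bpt n R l).2
          (Bpt n R p0).1 (Bpt n R p0).2 (Bpt n R l1).1 (Bpt n R l1).2 (R ^ 2)
          hCne (Bpt_norm_sq n R l) (Bpt_norm_sq n R p0) (Bpt_norm_sq n R l1)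
          (hstr_dist l (hstr l hl).1 (hstr l hl).2)
          (hstr_dist p0 (hstr p0 hp0).1 (hstr p0 hp0).2)
          (hstr_dist l1 (hstr l1 hl1).1 (hstr l1 hl1).2)
          (fun hh => hno3.1 (Bpt_injective n hn0 R hR0 l p0 (Prod.ext_iff.2 ⟨hh.1, hh.2⟩)))
          (fun hh => hno3.2 (Bpt_injective n hn0 R hR0 l l1 (Prod.ext_iff.2 ⟨hh.1, hh.2⟩)))
        exact hl1ne (Bpt_injective n hn0 R hR0 p0 l1 (Prod.ext_iff.2 ⟨hqj.1, hqj.2⟩)).symm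
      have hzero : ∀ l, l ≠ p0 → l ≠ l1 → lam l = 0 := by
        intro l h1 h2
        rcases eq_or_ne (lam l) 0 with h | h
        · exact h
        · rcases hsub l h with rfl | rfl
          · exact absurd rfl h1
          · exact absurd rfl h2
      have e1 := sum_two (fun i => lam i * (x.1.1 - (x.2 i).1)) p0 l1 (Ne.symm hl1ne)
        (fun l h1 h2 => by show lam l * (x.1.1 - (x.2 l).1) = 0; rw [hzero l h1 h2, zero_mul])
      have e2 := sum_two (fun i => lam i * (x.1.2 - (x.2 i).2)) p0 l1 (Ne.symm hl1ne)
        (fun l h1 h2 => by show lam l * (x.1.2 - (x.2 l).2) = 0; rw [hzero l h1 h2, zero_mul])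
      rw [hs1] at e1
      rw [hs2] at e2
      replace hs1 := e1.symm
      replace hs2 := e2.symm
      have hcr : (x.1.1 - (x.2 p0).1) * (x.1.2 - (x.2 l1).2)
          - (x.1.2 - (x.2 p0).2) * (x.1.1 - (x.2 l1).1) = 0 := by
        have hzz : lam p0 * ((x.1.1 - (x.2 p0).1) * (x.1.2 - (x.2 l1).2)
            - (x.1.2 - (x.2 p0).2) * (x.1.1 - (x.2 l1).1)) = 0 := by
          linear_combination (x.1.2 - (x.2 l1).2) * hs1 - (x.1.1 - (x.2 l1).1) * hs2
        rcases mul_eq_zero.1 hzz with h | h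
        · exact absurd h hp0
        · exact h
      have hs0 := hstr p0 hp0
      have hs1' := hstr l1 hl1
      rcases two_unit_cross _ _ _ _ (hunit p0).1 (hunit l1).1 hcr with ⟨g1, g2⟩ | ⟨g1, g2⟩
      · refine hl1ne (Bpt_injective n hn0 R hR0 l1 p0 (Prod.ext_iff.2 ⟨?_, ?_⟩)) <;>
          [linarith [hs0.1, hs1'.1, g1]; linarith [hs0.2, hs1'.2, g2]]
      · -- antipodal: |B_p0 - B_l1|² = 16, impossible
        have hch := chord_sq n R p0 l1
        have hb1 : (Bpt n R p0).1 - (Bpt n R l1).1 = -4 * (x.1.1 - (x.2 p0).1) := by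
          linarith [hs0.1, hs1'.1, g1]
        have hb2 : (Bpt n R p0).2 - (Bpt n R l1).2 = -4 * (x.1.2 - (x.2 p0).2) := by
          linarith [hs0.2, hs1'.2, g2]
        rw [hb1, hb2] at hch
        have h16 : (-4 * (x.1.1 - (x.2 p0).1)) ^ 2 + (-4 * (x.1.2 - (x.2 p0).2)) ^ 2 = 16 := by
          linear_combination 16 * (hunit p0).1
        rw [h16] at hch
        have hccb := cc_ge_neg_one n ((p0.val : ℤ) - l1.val)
        nlinarith [hccb, hR0, hR2, mul_pos hR0 hR0,
          mul_nonneg (by linarith : (0:ℝ) ≤ 1 + cc n ((p0.val : ℤ) - l1.val)) (sq_nonneg R)]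
    obtain ⟨k, hlk, hCB1, hCB2⟩ := hfold
    obtain ⟨j, hlj, hjk⟩ := hsecond k hlk
    have hstrj : x.1.1 - (x.2 j).1 = (x.2 j).1 - (Bpt n R j).1 ∧
        x.1.2 - (x.2 j).2 = (x.2 j).2 - (Bpt n R j).2 := by
      rcases hdich j hlj with h | h
      · exact h
      · exact absurd (Bpt_injective n hn0 R hR0 j k
          (Prod.ext_iff.2 ⟨by linarith [h.1], by linarith [h.2]⟩)) hjk
    have hj4 := hstr_dist j hstrj.1 hstrj.2
    have hchkj := chord_sq n R k j
    rw [← hCB1, ← hCB2] at hchkj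
    have h4eq : 2 * R ^ 2 * (1 - cc n ((k.val : ℤ) - j.val)) = 4 := by
      rw [← hchkj]; exact hj4
    -- upper bound using the half-turn index
    have hhalf_lt : n / 2 < n := by omega
    set i0 : Fin n := ⟨(k.val + n / 2) % n, Nat.mod_lt _ hn0⟩ with hi0
    have hcc0 : cc n ((k.val : ℤ) - i0.val) = cc n ((n / 2 : ℕ) : ℤ) := by
      have hval : (i0.val : ℤ) = (((k.val + n / 2) % n : ℕ) : ℤ) := rfl
      rw [hval, cc_sub_mod n hn0 k.val (n / 2), cc_neg]
    have hKle : R ^ 2 * KK n ≤ 4 := by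
      have hd := hdistle i0
      have hch := chord_sq n R k i0
      rw [← hCB1, ← hCB2] at hch
      rw [hch, hcc0] at hd
      rw [hKKdef]
      linarith
    have hge : cc n ((n / 2 : ℕ) : ℤ) ≤ cc n ((k.val : ℤ) - j.val) := cc_ge n hn _
    have hR2K : R ^ 2 * KK n = 4 := by
      have h5 : 4 ≤ R ^ 2 * KK n := by
        rw [hKKdef]
        nlinarith [mul_nonneg (sub_nonneg.2 hge) (sq_nonneg R)]
      linarith
    have hRR : R = Rcrit n := R_eq_Rcrit n hn R hR0 hR2K
    have hcancel : ∀ d : ℤ, 2 * R ^ 2 * (1 - cc n d) = 4 →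
        cc n d = cc n ((n / 2 : ℕ) : ℤ) := by
      intro d hd
      have h5 : 2 * R ^ 2 * (cc n ((n / 2 : ℕ) : ℤ) - cc n d) = 0 := by
        rw [hKKdef] at hR2K
        linear_combination hd - hR2K
      rcases mul_eq_zero.1 h5 with h | h
      · exfalso; nlinarith [hR0]
      · linarith
    have hcceq := hcancel _ h4eq
    refine ⟨hRR, ?_⟩
    rcases Nat.even_or_odd n with he | ho
    · -- even case
      left
      have hm1 : cc n ((n / 2 : ℕ) : ℤ) = -1 := cc_half_even n hn0 he
      have hzmod := cc_eq_neg_one_zmod n hn0 he _ (hcceq.trans hm1)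
      have hnn : n / 2 + n / 2 = n := by
        obtain ⟨w2, hw2⟩ := he
        omega
      have hhalf2 : ((n / 2 : ℕ) : ZMod n) + ((n / 2 : ℕ) : ZMod n) = 0 := by
        rw [← Nat.cast_add, hnn, ZMod.natCast_self]
      refine ⟨he, k, j, ?_, Prod.ext_iff.2 ⟨hCB1, hCB2⟩, enorm2_eq_two hj4, ?_⟩
      · push_cast at hzmod ⊢
        linear_combination (-1 : ZMod n) * hzmod - hhalf2
      · -- collinearity
        have huniq : ∀ l, lam l ≠ 0 → l = k ∨ l = j := by
          intro l hl
          rcases hdich l hl with hstr' | hfold'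
          · right
            have h4l := hstr_dist l hstr'.1 hstr'.2
            have hchl := chord_sq n R k l
            rw [← hCB1, ← hCB2] at hchl
            have h4eq' : 2 * R ^ 2 * (1 - cc n ((k.val : ℤ) - l.val)) = 4 := by
              rw [← hchl]; exact h4l
            have hz1 := cc_eq_neg_one_zmod n hn0 he _ ((hcancel _ h4eq').trans hm1)
            apply fin_eq_of_zmod hn0
            push_cast at hz1 hzmod ⊢
            linear_combination hzmod - hz1
          · left
            exact Bpt_injective n hn0 R hR0 l k
              (Prod.ext_iff.2 ⟨by linarith [hfold'.1], by linarith [hfold'.2]⟩)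
        have hzero : ∀ l, l ≠ k → l ≠ j → lam l = 0 := by
          intro l h1 h2
          rcases eq_or_ne (lam l) 0 with h | h
          · exact h
          · rcases huniq l h with rfl | rfl
            · exact absurd rfl h1
            · exact absurd rfl h2
        have e1 := sum_two (fun i => lam i * (x.1.1 - (x.2 i).1)) k j (Ne.symm hjk)
          (fun l h1 h2 => by show lam l * (x.1.1 - (x.2 l).1) = 0; rw [hzero l h1 h2, zero_mul])
        have e2 := sum_two (fun i => lam i * (x.1.2 - (x.2 i).2)) k j (Ne.symm hjk)
          (fun l h1 h2 => by show lam l * (x.1.2 - (x.2 l).2) = 0; rw [hzero l h1 h2, zero_mul])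
        rw [hs1] at e1
        rw [hs2] at e2
        replace hs1 := e1.symm
        replace hs2 := e2.symm
        have hcrka : (x.1.1 - (x.2 k).1) * (x.1.2 - (x.2 j).2)
            - (x.1.2 - (x.2 k).2) * (x.1.1 - (x.2 j).1) = 0 := by
          have hzz : lam k * ((x.1.1 - (x.2 k).1) * (x.1.2 - (x.2 j).2)
              - (x.1.2 - (x.2 k).2) * (x.1.1 - (x.2 j).1)) = 0 := by
            linear_combination (x.1.2 - (x.2 j).2) * hs1 - (x.1.1 - (x.2 j).1) * hs2
          rcases mul_eq_zero.1 hzz with h | h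
          · exact absurd h hlk
          · exact h
        have eb1 : (x.2 k).1 - (Bpt n R k).1 = -(x.1.1 - (x.2 k).1) := by linarith [hCB1]
        have eb2 : (x.2 k).2 - (Bpt n R k).2 = -(x.1.2 - (x.2 k).2) := by linarith [hCB2]
        have ej1 : (Bpt n R j).1 - (Bpt n R k).1 = -2 * (x.1.1 - (x.2 j).1) := by
          linarith [hCB1, hstrj.1]
        have ej2 : (Bpt n R j).2 - (Bpt n R k).2 = -2 * (x.1.2 - (x.2 j).2) := by
          linarith [hCB2, hstrj.2]
        rw [eb1, eb2, ej1, ej2]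
        linear_combination 2 * hcrka
    · -- odd case
      right
      obtain ⟨w, hw⟩ := ho
      have hm1lt : n / 2 + 1 < n := by omega
      set i1 : Fin n := ⟨(k.val + n / 2) % n, Nat.mod_lt _ hn0⟩ with hi1
      set j1 : Fin n := ⟨(k.val + (n / 2 + 1)) % n, Nat.mod_lt _ hn0⟩ with hj1
      have hne : i1 ≠ j1 := by
        intro hh
        have h1 : (k.val + n / 2) % n = (k.val + (n / 2 + 1)) % n := congrArg Fin.val hh
        have hmeq : Nat.ModEq n (k.val + n / 2) (k.val + (n / 2 + 1)) := h1
        have hdvd := (Nat.modEq_iff_dvd' (by omega)).1 hmeq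
        rw [show k.val + (n / 2 + 1) - (k.val + n / 2) = 1 from by omega] at hdvd
        have := Nat.le_of_dvd one_pos hdvd
        omega
      have hcci : cc n ((k.val : ℤ) - i1.val) = cc n ((n / 2 : ℕ) : ℤ) := by
        have hval : (i1.val : ℤ) = (((k.val + n / 2) % n : ℕ) : ℤ) := rfl
        rw [hval, cc_sub_mod n hn0 k.val (n / 2), cc_neg]
      have hccj : cc n ((k.val : ℤ) - j1.val) = cc n ((n / 2 : ℕ) : ℤ) := by
        have hval : (j1.val : ℤ) = (((k.val + (n / 2 + 1)) % n : ℕ) : ℤ) := rfl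
        rw [hval, cc_sub_mod n hn0 k.val (n / 2 + 1), cc_neg_succ_half n hn0 ⟨w, hw⟩]
      have hdi : (x.1.1 - (Bpt n R i1).1) ^ 2 + (x.1.2 - (Bpt n R i1).2) ^ 2 = 4 := by
        have hch := chord_sq n R k i1
        rw [← hCB1, ← hCB2] at hch
        rw [hch, hcci, hKKdef] at *
        rw [hKKdef] at hR2K
        linarith
      have hdj : (x.1.1 - (Bpt n R j1).1) ^ 2 + (x.1.2 - (Bpt n R j1).2) ^ 2 = 4 := by
        have hch := chord_sq n R k j1
        rw [← hCB1, ← hCB2] at hch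
        rw [hch, hccj]
        rw [hKKdef] at hR2K
        linarith
      exact ⟨⟨w, hw⟩, k, Prod.ext_iff.2 ⟨hCB1, hCB2⟩, i1, j1, hne,
        enorm2_eq_two hdi, enorm2_eq_two hdj⟩
  · -- backward direction
    rintro ⟨hRR, hcase | hcase⟩
    · -- even
      obtain ⟨he, k, j, hz, hCB, hdist, hcrossH⟩ := hcase
      have hCB1 : x.1.1 = (Bpt n R k).1 := by rw [hCB]
      have hCB2 : x.1.2 = (Bpt n R k).2 := by rw [hCB]
      have hj4 : (x.1.1 - (Bpt n R j).1) ^ 2 + (x.1.2 - (Bpt n R j).2) ^ 2 = 4 :=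
        sq_of_enorm2_two hdist
      have hjk : j ≠ k := by
        intro hh
        rw [hh, hCB1, hCB2] at hj4
        norm_num at hj4
      obtain ⟨hsj1, hsj2⟩ := stretch_of_dist _ _ _ _ (hunit j).1 (hunit j).2
        (by linear_combination hj4)
      have hb1 : (x.2 k).1 - (Bpt n R k).1 = -(x.1.1 - (x.2 k).1) := by linarith [hCB1]
      have hb2 : (x.2 k).2 - (Bpt n R k).2 = -(x.1.2 - (x.2 k).2) := by linarith [hCB2]
      have ej1 : (Bpt n R j).1 - (Bpt n R k).1 = -2 * (x.1.1 - (x.2 j).1) := by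
        linarith [hCB1, hsj1]
      have ej2 : (Bpt n R j).2 - (Bpt n R k).2 = -2 * (x.1.2 - (x.2 j).2) := by
        linarith [hCB2, hsj2]
      rw [hb1, hb2, ej1, ej2] at hcrossH
      have hcr : (x.1.1 - (x.2 k).1) * (x.1.2 - (x.2 j).2)
          - (x.1.2 - (x.2 k).2) * (x.1.1 - (x.2 j).1) = 0 := by
        linear_combination ((1 : ℝ)/2) * hcrossH
      have heps : ∃ e : ℝ, x.1.1 - (x.2 k).1 = e * (x.1.1 - (x.2 j).1) ∧
          x.1.2 - (x.2 k).2 = e * (x.1.2 - (x.2 j).2) := by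
        rcases two_unit_cross _ _ _ _ (hunit k).1 (hunit j).1 hcr with ⟨g1, g2⟩ | ⟨g1, g2⟩
        · exact ⟨1, by linarith, by linarith⟩
        · exact ⟨-1, by linarith, by linarith⟩
      obtain ⟨e, he1, he2⟩ := heps
      refine ⟨fun l => if l = k then 1 else if l = j then -e else 0,
              fun l => if l = k then -1 else if l = j then -e else 0,
              ⟨k, Or.inl (by simp)⟩, ?_, ?_, ?_⟩
      · have hsum := sum_two
          (fun i => (if i = k then (1:ℝ) else if i = j then -e else 0) * (x.1.1 - (x.2 i).1))
          k j (Ne.symm hjk) (fun l h1 h2 => by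
            show (if l = k then (1:ℝ) else if l = j then -e else 0) * (x.1.1 - (x.2 l).1) = 0
            rw [if_neg h1, if_neg h2, zero_mul])
        simp only at hsum
        rw [hsum]
        simp only [if_true, if_neg hjk]
        linarith [he1]
      · have hsum := sum_two
          (fun i => (if i = k then (1:ℝ) else if i = j then -e else 0) * (x.1.2 - (x.2 i).2))
          k j (Ne.symm hjk) (fun l h1 h2 => by
            show (if l = k then (1:ℝ) else if l = j then -e else 0) * (x.1.2 - (x.2 l).2) = 0
            rw [if_neg h1, if_neg h2, zero_mul])
        simp only at hsum
        rw [hsum]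
        simp only [if_true, if_neg hjk]
        linarith [he2]
      · intro l
        simp only []
        rcases eq_or_ne l k with rfl | hlk'
        · simp only [eq_self_iff_true, if_true]
          constructor
          · rw [hb1]; ring
          · rw [hb2]; ring
        · rcases eq_or_ne l j with rfl | hlj'
          · simp only [if_neg hlk', eq_self_iff_true, if_true]
            constructor
            · rw [hsj1]
            · rw [hsj2]
          · simp only [if_neg hlk', if_neg hlj']
            constructor <;> norm_num
    · -- odd
      obtain ⟨ho, k, hCB, i, j, hij, hdisti, hdistj⟩ := hcase
      have hCB1 : x.1.1 = (Bpt n R k).1 := by rw [hCB]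
      have hCB2 : x.1.2 = (Bpt n R k).2 := by rw [hCB]
      have hi4 : (x.1.1 - (Bpt n R i).1) ^ 2 + (x.1.2 - (Bpt n R i).2) ^ 2 = 4 :=
        sq_of_enorm2_two hdisti
      have hj4 : (x.1.1 - (Bpt n R j).1) ^ 2 + (x.1.2 - (Bpt n R j).2) ^ 2 = 4 :=
        sq_of_enorm2_two hdistj
      have hik : i ≠ k := by
        intro hh
        rw [hh, hCB1, hCB2] at hi4
        norm_num at hi4
      have hjk : j ≠ k := by
        intro hh
        rw [hh, hCB1, hCB2] at hj4
        norm_num at hj4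
      obtain ⟨hsi1, hsi2⟩ := stretch_of_dist _ _ _ _ (hunit i).1 (hunit i).2
        (by linear_combination hi4)
      obtain ⟨hsj1, hsj2⟩ := stretch_of_dist _ _ _ _ (hunit j).1 (hunit j).2
        (by linear_combination hj4)
      have hb1 : (x.2 k).1 - (Bpt n R k).1 = -(x.1.1 - (x.2 k).1) := by linarith [hCB1]
      have hb2 : (x.2 k).2 - (Bpt n R k).2 = -(x.1.2 - (x.2 k).2) := by linarith [hCB2]
      have hD : (x.1.1 - (x.2 i).1) * (x.1.2 - (x.2 j).2)
          - (x.1.2 - (x.2 i).2) * (x.1.1 - (x.2 j).1) ≠ 0 := by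
        intro h0
        rcases two_unit_cross _ _ _ _ (hunit i).1 (hunit j).1 h0 with ⟨g1, g2⟩ | ⟨g1, g2⟩
        · -- a_i = a_j ⟹ B_i = B_j
          apply hij
          apply Bpt_injective n hn0 R hR0
          apply Prod.ext_iff.2
          constructor
          · have u1 : x.1.1 - (Bpt n R i).1 = 2 * (x.1.1 - (x.2 i).1) := by linarith [hsi1]
            have u2 : x.1.1 - (Bpt n R j).1 = 2 * (x.1.1 - (x.2 j).1) := by linarith [hsj1]
            linarith
          · have u1 : x.1.2 - (Bpt n R i).2 = 2 * (x.1.2 - (x.2 i).2) := by linarith [hsi2]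
            have u2 : x.1.2 - (Bpt n R j).2 = 2 * (x.1.2 - (x.2 j).2) := by linarith [hsj2]
            linarith
        · -- antipodal
          have hch := chord_sq n R i j
          have hb1' : (Bpt n R i).1 - (Bpt n R j).1 = -4 * (x.1.1 - (x.2 i).1) := by
            linarith [hsi1, hsj1, g1]
          have hb2' : (Bpt n R i).2 - (Bpt n R j).2 = -4 * (x.1.2 - (x.2 i).2) := by
            linarith [hsi2, hsj2, g2]
          rw [hb1', hb2'] at hch
          have h16 : (-4 * (x.1.1 - (x.2 i).1)) ^ 2 + (-4 * (x.1.2 - (x.2 i).2)) ^ 2 = 16 := by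
            linear_combination 16 * (hunit i).1
          rw [h16] at hch
          have hccb := cc_ge_neg_one n ((i.val : ℤ) - j.val)
          nlinarith [hccb, hR0, hR2, mul_pos hR0 hR0,
            mul_nonneg (by linarith : (0:ℝ) ≤ 1 + cc n ((i.val : ℤ) - j.val)) (sq_nonneg R)]
      set D := (x.1.1 - (x.2 i).1) * (x.1.2 - (x.2 j).2)
          - (x.1.2 - (x.2 i).2) * (x.1.1 - (x.2 j).1) with hDdef
      set c1 := (x.1.1 - (x.2 k).1) * (x.1.2 - (x.2 j).2)
          - (x.1.2 - (x.2 k).2) * (x.1.1 - (x.2 j).1) with hc1def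
      set c2 := (x.1.1 - (x.2 i).1) * (x.1.2 - (x.2 k).2)
          - (x.1.2 - (x.2 i).2) * (x.1.1 - (x.2 k).1) with hc2def
      refine ⟨fun l => if l = k then D else if l = i then -c1 else if l = j then -c2 else 0,
              fun l => if l = k then -D else if l = i then -c1 else if l = j then -c2 else 0,
              ⟨k, Or.inl (by simp [hD])⟩, ?_, ?_, ?_⟩
      · have hsum := sum_three
          (fun l => (if l = k then D else if l = i then -c1 else if l = j then -c2 else 0)
            * (x.1.1 - (x.2 l).1)) k i j (Ne.symm hik) (Ne.symm hjk) hij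
          (fun l h1 h2 h3 => by
            show (if l = k then D else if l = i then -c1 else if l = j then -c2 else 0)
              * (x.1.1 - (x.2 l).1) = 0
            rw [if_neg h1, if_neg h2, if_neg h3, zero_mul])
        simp only at hsum
        rw [hsum]
        simp only [if_true, if_neg hik, if_neg hjk, if_neg (Ne.symm hij)]
        rw [hDdef, hc1def, hc2def]
        ring
      · have hsum := sum_three
          (fun l => (if l = k then D else if l = i then -c1 else if l = j then -c2 else 0)
            * (x.1.2 - (x.2 l).2)) k i j (Ne.symm hik) (Ne.symm hjk) hij
          (fun l h1 h2 h3 => by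
            show (if l = k then D else if l = i then -c1 else if l = j then -c2 else 0)
              * (x.1.2 - (x.2 l).2) = 0
            rw [if_neg h1, if_neg h2, if_neg h3, zero_mul])
        simp only at hsum
        rw [hsum]
        simp only [if_true, if_neg hik, if_neg hjk, if_neg (Ne.symm hij)]
        rw [hDdef, hc1def, hc2def]
        ring
      · intro l
        simp only []
        rcases eq_or_ne l k with rfl | hlk'
        · simp only [eq_self_iff_true, if_true]
          constructor
          · rw [hb1]; ring
          · rw [hb2]; ring
        · rcases eq_or_ne l i with rfl | hli'
          · simp only [if_neg hlk', eq_self_iff_true, if_true]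
            constructor
            · rw [hsi1]
            · rw [hsi2]
          · rcases eq_or_ne l j with rfl | hlj'
            · simp only [if_neg hlk', if_neg hli', eq_self_iff_true, if_true]
              constructor
              · rw [hsj1]
              · rw [hsj2]
            · simp only [if_neg hlk', if_neg hli', if_neg hlj']
              constructor <;> norm_num
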